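/- arXiv:2504.20971 — 5 statements merged into one kernel-verified Lean document; each statement's English description precedes it below -/
import Mathlib

section
/- For two bounded self-adjoint operators A, B on a Hilbert space, the Hausdorff distance between their spectra satisfies d_Hausdorff(spec A, spec B) ≤ ‖A − B‖. -/
lemma infDist_le_of_mem_spectrum
    {H : Type*} [NormedAddCommGroup H] [InnerProductSpace ℂ H] [CompleteSpace H]
    (A B : H →L[ℂ] H) (hB : IsSelfAdjoint B)
    {μ : ℝ} (hμ : μ ∈ spectrum ℝ A) :
    Metric.infDist μ (spectrum ℝ B) ≤ ‖A - B‖ := by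
  by_contra hcon
  push_neg at hcon
  set d := Metric.infDist μ (spectrum ℝ B) with hd
  have hd0 : 0 < d := lt_of_le_of_lt (norm_nonneg _) hcon
  have hdist : ∀ x ∈ spectrum ℝ B, d ≤ |μ - x| := by
    intro x hx
    simpa [Real.dist_eq] using Metric.infDist_le_dist_of_mem hx
  have hne : ∀ x ∈ spectrum ℝ B, μ - x ≠ 0 := fun x hx h => by
    have := hdist x hx; rw [h] at this; simp at this; linarith
  -- the resolvent of B at μ via the continuous functional calculus
  set f : ℝ → ℝ := fun x => (μ - x)⁻¹ with hf
  set g : ℝ → ℝ := fun x => μ - x with hg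
  have hgc : ContinuousOn g (spectrum ℝ B) := (continuous_const.sub continuous_id).continuousOn
  have hfc : ContinuousOn f (spectrum ℝ B) := hgc.inv₀ hne
  set R : H →L[ℂ] H := cfc f B with hR
  have hcfcg : cfc g B = algebraMap ℝ (H →L[ℂ] H) μ - B := by
    have h1 : cfc g B = cfc (fun _ : ℝ => μ) B - cfc (id : ℝ → ℝ) B :=
      cfc_sub _ _ B continuousOn_const continuousOn_id
    rw [h1, cfc_const μ B, cfc_id ℝ B]
  have hmul : R * (algebraMap ℝ (H →L[ℂ] H) μ - B) = 1 := by
    rw [← hcfcg, hR, ← cfc_mul f g B hfc hgc]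
    have : cfc (fun x => f x * g x) B = cfc (fun _ : ℝ => (1 : ℝ)) B :=
      cfc_congr fun x hx => inv_mul_cancel₀ (hne x hx)
    rw [this, cfc_const 1 B, map_one]
  have hmul' : (algebraMap ℝ (H →L[ℂ] H) μ - B) * R = 1 := by
    rw [← hcfcg, hR, ← cfc_mul g f B hgc hfc]
    have : cfc (fun x => g x * f x) B = cfc (fun _ : ℝ => (1 : ℝ)) B :=
      cfc_congr fun x hx => mul_inv_cancel₀ (hne x hx)
    rw [this, cfc_const 1 B, map_one]
  have hRnorm : ‖R‖ ≤ d⁻¹ := by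
    apply norm_cfc_le (by positivity)
    intro x hx
    rw [Real.norm_eq_abs, abs_inv]
    exact inv_anti₀ hd0 (hdist x hx)
  have hsmall : ‖R * (A - B)‖ < 1 := by
    calc ‖R * (A - B)‖ ≤ ‖R‖ * ‖A - B‖ := norm_mul_le _ _
    _ ≤ d⁻¹ * ‖A - B‖ := by gcongr
    _ < d⁻¹ * d := by gcongr
    _ = 1 := inv_mul_cancel₀ hd0.ne'
  have hunit1 : IsUnit (1 - R * (A - B)) := isUnit_one_sub_of_norm_lt_one hsmall
  have hunitB : IsUnit (algebraMap ℝ (H →L[ℂ] H) μ - B) :=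
    ⟨⟨_, R, hmul', hmul⟩, rfl⟩
  have hfact : algebraMap ℝ (H →L[ℂ] H) μ - A
      = (algebraMap ℝ (H →L[ℂ] H) μ - B) * (1 - R * (A - B)) := by
    rw [mul_sub, mul_one, ← mul_assoc, hmul', one_mul]
    abel
  have : IsUnit (algebraMap ℝ (H →L[ℂ] H) μ - A) := hfact ▸ hunitB.mul hunit1
  exact spectrum.notMem_iff.mpr this hμ

theorem hausdorffDist_spectrum_le_norm_sub
    {H : Type*} [NormedAddCommGroup H] [InnerProductSpace ℂ H] [CompleteSpace H]
    (A B : H →L[ℂ] H) (hA : IsSelfAdjoint A) (hB : IsSelfAdjoint B) :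
    Metric.hausdorffDist (spectrum ℝ A) (spectrum ℝ B) ≤ ‖A - B‖ := by
  have key : ∀ (S T : H →L[ℂ] H), IsSelfAdjoint S → IsSelfAdjoint T →
      ∀ μ ∈ spectrum ℝ S, ∃ ν ∈ spectrum ℝ T, dist μ ν ≤ ‖S - T‖ := by
    intro S T hS hT μ hμ
    have hnt : Nontrivial (H →L[ℂ] H) := by
      rcases subsingleton_or_nontrivial (H →L[ℂ] H) with h | h
      · exact absurd hμ (spectrum.notMem_iff.mpr (isUnit_of_subsingleton _))
      · exact h
    obtain ⟨ν, hν, hνd⟩ := (spectrum.isCompact (𝕜 := ℝ) T).exists_infDist_eq_dist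
      (hT.spectrum_nonempty) μ
    exact ⟨ν, hν, hνd ▸ infDist_le_of_mem_spectrum S T hT hμ⟩
  apply Metric.hausdorffDist_le_of_mem_dist (norm_nonneg _)
  · exact key A B hA hB
  · intro μ hμ
    obtain ⟨ν, hν, h⟩ := key B A hB hA μ hμ
    exact ⟨ν, hν, by rwa [norm_sub_rev]⟩
end

section
/- For compact, injective, self-adjoint operators R, R̃ with spectrum in [0,1] and ordered eigenvalue sequences (μ_k), (μ̃_k), the spectral distance d_SPEC(R,R̃) := sup_k |μ_k − μ̃_k| dominates the unitary distance: d_UNI(R,R̃) ≤ d_SPEC(R,R̃). -/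
noncomputable def conjOp {H H' : Type*} [NormedAddCommGroup H] [InnerProductSpace ℂ H]
    [NormedAddCommGroup H'] [InnerProductSpace ℂ H']
    (U : H ≃ₗᵢ[ℂ] H') (R : H →L[ℂ] H) : H' →L[ℂ] H' :=
  ((U.toContinuousLinearEquiv : H →L[ℂ] H').comp R).comp
    (U.symm.toContinuousLinearEquiv : H' →L[ℂ] H)

/-- `dUNI R R'` is the infimum of `‖R' - U R U*‖` over all unitaries `U : H → H'`. -/
noncomputable def dUNI {H H' : Type*} [NormedAddCommGroup H] [InnerProductSpace ℂ H]
    [NormedAddCommGroup H'] [InnerProductSpace ℂ H']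
    (R : H →L[ℂ] H) (R' : H' →L[ℂ] H') : ℝ :=
  sInf { d : ℝ | ∃ U : H ≃ₗᵢ[ℂ] H', d = ‖R' - conjOp U R‖ }

-- auxiliary: diagonal operator norm bound
theorem diag_opNorm_le {H' : Type*} [NormedAddCommGroup H'] [InnerProductSpace ℂ H']
    [CompleteSpace H'] (ψ' : HilbertBasis ℕ ℂ H') (T : H' →L[ℂ] H') (d : ℕ → ℝ) {M : ℝ}
    (hM : 0 ≤ M) (hd : ∀ k, |d k| ≤ M)
    (hT : ∀ k, T (ψ' k) = ((d k : ℝ) : ℂ) • ψ' k) : ‖T‖ ≤ M := by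
  refine T.opNorm_le_bound hM fun x => ?_
  set c : lp (fun _ : ℕ => ℂ) 2 := ψ'.repr x with hc
  have h2 : (2 : ENNReal).toReal = 2 := by norm_num
  have hsumc : Summable fun i => ‖c i‖ ^ (2 : ENNReal).toReal := (lp.memℓp c).summable (by norm_num)
  have hbound : ∀ i, ‖(d i : ℂ) * c i‖ ^ (2 : ENNReal).toReal ≤ M ^ 2 * ‖c i‖ ^ (2 : ENNReal).toReal := by
    intro i
    rw [h2, Real.rpow_two, Real.rpow_two, norm_mul]
    calc (‖(d i : ℂ)‖ * ‖c i‖) ^ 2 = ‖(d i : ℂ)‖ ^ 2 * ‖c i‖ ^ 2 := by ring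
    _ ≤ M ^ 2 * ‖c i‖ ^ 2 := by
        have h1 : ‖(d i : ℂ)‖ ≤ M := by rw [Complex.norm_real]; exact hd i
        have h2 : ‖(d i : ℂ)‖ ^ 2 ≤ M ^ 2 := pow_le_pow_left₀ (norm_nonneg _) h1 2
        exact mul_le_mul_of_nonneg_right h2 (sq_nonneg _)
  have hfmem : Memℓp (fun i => (d i : ℂ) * c i) 2 := by
    refine memℓp_gen (Summable.of_nonneg_of_le (fun i => ?_) hbound (hsumc.mul_left (M ^ 2)))
    positivity
  set f : lp (fun _ : ℕ => ℂ) 2 := ⟨fun i => (d i : ℂ) * c i, hfmem⟩ with hf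
  have hTx : T x = ψ'.repr.symm f := by
    have h1 : HasSum (fun i => ((d i : ℂ) * c i) • ψ' i) (T x) := by
      have := (ψ'.hasSum_repr x).mapL T
      simpa only [map_smul, hT, smul_smul, mul_comm] using this
    have h2' : HasSum (fun i => ((d i : ℂ) * c i) • ψ' i) (ψ'.repr.symm f) :=
      ψ'.hasSum_repr_symm f
    exact h1.unique h2'
  have hnTx : ‖T x‖ = ‖f‖ := by rw [hTx, LinearIsometryEquiv.norm_map]
  have hnx : ‖x‖ = ‖c‖ := (ψ'.repr.norm_map x).symm
  rw [hnTx, hnx]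
  refine lp.norm_le_of_tsum_le (by norm_num) (mul_nonneg hM (norm_nonneg c)) ?_
  have hrhs : (M * ‖c‖) ^ (2 : ENNReal).toReal = M ^ 2 * ∑' i, ‖c i‖ ^ (2 : ENNReal).toReal := by
    rw [← lp.norm_rpow_eq_tsum (by norm_num) c, h2, Real.rpow_two, Real.rpow_two]
    ring
  rw [hrhs]
  calc ∑' i, ‖f i‖ ^ (2 : ENNReal).toReal ≤ ∑' i, M ^ 2 * ‖c i‖ ^ (2 : ENNReal).toReal := by
        refine Summable.tsum_le_tsum (fun i => hbound i) ?_ (hsumc.mul_left _)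
        exact Summable.of_nonneg_of_le (fun i => by positivity) hbound (hsumc.mul_left _)
  _ = M ^ 2 * ∑' i, ‖c i‖ ^ (2 : ENNReal).toReal := by rw [tsum_mul_left]

open Filter in
theorem dUNI_le_dSPEC
    {H H' : Type*}
    [NormedAddCommGroup H] [InnerProductSpace ℂ H] [CompleteSpace H]
    [TopologicalSpace.SeparableSpace H]
    [NormedAddCommGroup H'] [InnerProductSpace ℂ H'] [CompleteSpace H']
    [TopologicalSpace.SeparableSpace H']
    (hinf : ¬ FiniteDimensional ℂ H) (hinf' : ¬ FiniteDimensional ℂ H')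
    (R : H →L[ℂ] H) (R' : H' →L[ℂ] H')
    (hc : IsCompactOperator R) (hc' : IsCompactOperator R')
    (hsa : IsSelfAdjoint R) (hsa' : IsSelfAdjoint R')
    (hinj : Function.Injective R) (hinj' : Function.Injective R')
    (μ μ' : ℕ → ℝ)
    (hpos : ∀ k, 0 < μ k) (hpos' : ∀ k, 0 < μ' k)
    (hle : ∀ k, μ k ≤ 1) (hle' : ∀ k, μ' k ≤ 1)
    (hmono : Antitone μ) (hmono' : Antitone μ')
    (hlim : Tendsto μ atTop (nhds 0)) (hlim' : Tendsto μ' atTop (nhds 0))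
    (ψ : HilbertBasis ℕ ℂ H) (ψ' : HilbertBasis ℕ ℂ H')
    (heig : ∀ k, R (ψ k) = (μ k : ℂ) • ψ k)
    (heig' : ∀ k, R' (ψ' k) = (μ' k : ℂ) • ψ' k) :
    dUNI R R' ≤ ⨆ k, |μ k - μ' k| := by
  classical
  set M : ℝ := ⨆ k, |μ k - μ' k| with hM
  have hbdd : BddAbove (Set.range fun k => |μ k - μ' k|) := by
    refine ⟨1, ?_⟩
    rintro - ⟨k, rfl⟩
    rw [abs_sub_le_iff]
    constructor <;> nlinarith [hpos k, hpos' k, hle k, hle' k]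
  have hM0 : 0 ≤ M := Real.iSup_nonneg fun k => abs_nonneg _
  have hdM : ∀ k, |μ' k - μ k| ≤ M := by
    intro k
    rw [abs_sub_comm]
    exact le_ciSup hbdd k
  -- the unitary
  set U : H ≃ₗᵢ[ℂ] H' := ψ.repr.trans ψ'.repr.symm with hU
  have hUψ : ∀ k, U (ψ k) = ψ' k := by
    intro k
    simp only [hU, LinearIsometryEquiv.trans_apply, ψ.repr_self]
    exact congrArg ψ'.repr.symm (ψ'.repr_self k).symm ▸ ψ'.repr.symm_apply_apply (ψ' k)
  have hUsymm : ∀ k, U.symm (ψ' k) = ψ k := by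
    intro k
    rw [← hUψ k, U.symm_apply_apply]
  set T : H' →L[ℂ] H' := R' - conjOp U R with hT
  have hTψ : ∀ k, T (ψ' k) = ((μ' k - μ k : ℝ) : ℂ) • ψ' k := by
    intro k
    have hconj : conjOp U R (ψ' k) = (μ k : ℂ) • ψ' k := by
      simp only [conjOp, ContinuousLinearMap.comp_apply, ContinuousLinearEquiv.coe_coe,
        LinearIsometryEquiv.coe_toContinuousLinearEquiv, hUsymm, heig, map_smul, hUψ]
    simp only [hT, ContinuousLinearMap.sub_apply, heig', hconj, ← sub_smul]
    push_cast
    ring_nf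
  have hnorm : ‖T‖ ≤ M := diag_opNorm_le ψ' T (fun k => μ' k - μ k) hM0 hdM hTψ
  have hmem : ‖T‖ ∈ { d : ℝ | ∃ U : H ≃ₗᵢ[ℂ] H', d = ‖R' - conjOp U R‖ } := ⟨U, rfl⟩
  have hbelow : BddBelow { d : ℝ | ∃ U : H ≃ₗᵢ[ℂ] H', d = ‖R' - conjOp U R‖ } := by
    refine ⟨0, ?_⟩
    rintro - ⟨V, rfl⟩
    exact norm_nonneg _
  exact le_trans (csInf_le hbelow hmem) hnorm
end

section
/- δ-quasi-unitary equivalence with δ = 0 implies J is unitary and R̃ = JRJ*: if ‖J‖ ≤ 1, ‖J'‖ ≤ 1, J' = J*, (id_H − J'J)R = 0, (id_{H̃} − JJ')R̃ = 0, JR = R̃J and J'R̃ = RJ', and R, R̃ are injective self-adjoint with spectrum in [0,1], then J*J = id_H, JJ* = id_{H̃}, and R̃ = JRJ*. -/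
open ContinuousLinearMap in
lemma selfadj_inj_denseRange {H : Type*} [NormedAddCommGroup H]
    [InnerProductSpace ℂ H] [CompleteSpace H] (R : H →L[ℂ] H)
    (hsa : IsSelfAdjoint R) (hinj : Function.Injective R) :
    DenseRange R := by
  have horth : (LinearMap.range (R : H →ₗ[ℂ] H) : Submodule ℂ H)ᗮ = ⊥ := by
    rw [Submodule.eq_bot_iff]
    intro y hy
    have hRy : R y = 0 := by
      rw [← inner_self_eq_zero (𝕜 := ℂ) (x := R y)]
      have := hy (R (R y)) ⟨R y, rfl⟩
      calc (inner ℂ (R y) (R y) : ℂ) = inner ℂ (R (R y)) y := by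
            rw [← ContinuousLinearMap.adjoint_inner_left, hsa.adjoint_eq]
        _ = 0 := this
    have := hinj (hRy.trans (map_zero R).symm)
    exact this
  have hcl : (LinearMap.range (R : H →ₗ[ℂ] H) : Submodule ℂ H).topologicalClosure = ⊤ := by
    rw [Submodule.topologicalClosure_eq_top_iff, horth]
  have : closure (Set.range R) = Set.univ := by
    have := congrArg (SetLike.coe) hcl
    simpa [Submodule.topologicalClosure_coe, LinearMap.coe_range] using this
  rw [DenseRange, dense_iff_closure_eq, this]

open ContinuousLinearMap in
lemma comp_eq_zero_of_denseRange {H H' : Type*} [NormedAddCommGroup H]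
    [InnerProductSpace ℂ H] [NormedAddCommGroup H'] [InnerProductSpace ℂ H']
    (R : H →L[ℂ] H) (T : H →L[ℂ] H') (hd : DenseRange R)
    (h : T.comp R = 0) : T = 0 := by
  have hfun : ⇑T = ⇑(0 : H →L[ℂ] H') :=
    Continuous.ext_on hd T.continuous continuous_zero (by
      rintro _ ⟨y, rfl⟩
      exact congrFun (congrArg DFunLike.coe h) y)
  ext x
  exact congrFun hfun x
theorem zero_quasi_unitary_is_unitary
    {H H' : Type*}
    [NormedAddCommGroup H] [InnerProductSpace ℂ H] [CompleteSpace H]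
    [NormedAddCommGroup H'] [InnerProductSpace ℂ H'] [CompleteSpace H']
    (R : H →L[ℂ] H) (R' : H' →L[ℂ] H')
    (hsa : IsSelfAdjoint R) (hsa' : IsSelfAdjoint R')
    (hinj : Function.Injective R) (hinj' : Function.Injective R')
    (hs : spectrum ℝ R ⊆ Set.Icc (0:ℝ) 1) (hs' : spectrum ℝ R' ⊆ Set.Icc (0:ℝ) 1)
    (J : H →L[ℂ] H') (J' : H' →L[ℂ] H)
    (hJ : ‖J‖ ≤ 1) (hJ' : ‖J'‖ ≤ 1)
    (hJadj : J' = ContinuousLinearMap.adjoint J)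
    (h1 : (1 - J'.comp J).comp R = 0)
    (h2 : (1 - J.comp J').comp R' = 0)
    (h3 : J.comp R = R'.comp J)
    (h4 : J'.comp R' = R.comp J') :
    (ContinuousLinearMap.adjoint J).comp J = 1 ∧
    J.comp (ContinuousLinearMap.adjoint J) = 1 ∧
    R' = (J.comp R).comp (ContinuousLinearMap.adjoint J) := by
  have hd := selfadj_inj_denseRange R hsa hinj
  have hd' := selfadj_inj_denseRange R' hsa' hinj'
  have e1 : J'.comp J = 1 := by
    have := comp_eq_zero_of_denseRange R _ hd h1
    have := sub_eq_zero.mp this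
    exact this.symm
  have e2 : J.comp J' = 1 := by
    have := comp_eq_zero_of_denseRange R' _ hd' h2
    have := sub_eq_zero.mp this
    exact this.symm
  subst hJadj
  refine ⟨e1, e2, ?_⟩
  rw [ContinuousLinearMap.comp_assoc, ← h4, ← ContinuousLinearMap.comp_assoc, e2,
    ContinuousLinearMap.one_def, ContinuousLinearMap.id_comp]
end

section
/- Quasi-unitary equivalence with J' replaced by J*: if R and R̃ are δ-quasi-unitarily equivalent with identification operators J and J' and δ ∈ [0,1], then ‖(id_H − J*J)R‖ ≤ 3δ, ‖(id_{H̃} − JJ*)R̃‖ ≤ 3δ, and ‖J*R̃ − RJ*‖ ≤ 3δ. -/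
open ContinuousLinearMap

lemma norm_le_one_of_spectrum_subset
    {H : Type*} [NormedAddCommGroup H] [InnerProductSpace ℂ H] [CompleteSpace H]
    (R : H →L[ℂ] H) (hsa : IsSelfAdjoint R)
    (hs : spectrum ℝ R ⊆ Set.Icc (0:ℝ) 1) : ‖R‖ ≤ 1 := by
  rw [← hsa.toReal_spectralRadius_eq_norm]
  have h : spectralRadius ℝ R ≤ 1 := by
    apply iSup₂_le
    intro k hk
    obtain ⟨hk0, hk1⟩ := hs hk
    have : ‖k‖₊ ≤ 1 := by
      rw [← NNReal.coe_le_coe, coe_nnnorm, Real.norm_eq_abs, abs_of_nonneg hk0]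
      exact hk1
    exact_mod_cast this
  calc (spectralRadius ℝ R).toReal ≤ (1 : ENNReal).toReal :=
        ENNReal.toReal_mono (by simp) h
    _ = 1 := by simp

theorem quasi_unitary_with_adjoint
    {H H' : Type*}
    [NormedAddCommGroup H] [InnerProductSpace ℂ H] [CompleteSpace H]
    [NormedAddCommGroup H'] [InnerProductSpace ℂ H'] [CompleteSpace H']
    (R : H →L[ℂ] H) (R' : H' →L[ℂ] H')
    (hsa : IsSelfAdjoint R) (hsa' : IsSelfAdjoint R')
    (hs : spectrum ℝ R ⊆ Set.Icc (0:ℝ) 1) (hs' : spectrum ℝ R' ⊆ Set.Icc (0:ℝ) 1)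
    (J : H →L[ℂ] H') (J' : H' →L[ℂ] H) (δ : ℝ)
    (hδ0 : 0 ≤ δ) (hδ1 : δ ≤ 1)
    (hJ : ‖J‖ ≤ 1 + δ) (hJ' : ‖J'‖ ≤ 1 + δ)
    (hadj : ‖J' - ContinuousLinearMap.adjoint J‖ ≤ δ)
    (h1 : ‖(1 - J'.comp J).comp R‖ ≤ δ)
    (h2 : ‖(1 - J.comp J').comp R'‖ ≤ δ)
    (h3 : ‖J.comp R - R'.comp J‖ ≤ δ)
    (h4 : ‖J'.comp R' - R.comp J'‖ ≤ δ) :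
    ‖(1 - (ContinuousLinearMap.adjoint J).comp J).comp R‖ ≤ 3 * δ ∧
    ‖(1 - J.comp (ContinuousLinearMap.adjoint J)).comp R'‖ ≤ 3 * δ ∧
    ‖(ContinuousLinearMap.adjoint J).comp R' - R.comp (ContinuousLinearMap.adjoint J)‖ ≤ 3 * δ := by
  set K := ContinuousLinearMap.adjoint J with hK
  have hR : ‖R‖ ≤ 1 := norm_le_one_of_spectrum_subset R hsa hs
  have hR' : ‖R'‖ ≤ 1 := norm_le_one_of_spectrum_subset R' hsa' hs'
  have hD : ‖(J' - K).comp J‖ ≤ δ * (1 + δ) :=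
    le_trans (opNorm_comp_le _ _) (mul_le_mul hadj hJ (norm_nonneg _) hδ0)
  have hD' : ‖J.comp (J' - K)‖ ≤ (1 + δ) * δ :=
    le_trans (opNorm_comp_le _ _) (mul_le_mul hJ hadj (norm_nonneg _) (by linarith))
  refine ⟨?_, ?_, ?_⟩
  · have heq : (1 - K.comp J).comp R
        = (1 - J'.comp J).comp R + ((J' - K).comp J).comp R := by
      ext x; simp
    rw [heq]
    calc ‖(1 - J'.comp J).comp R + ((J' - K).comp J).comp R‖
        ≤ ‖(1 - J'.comp J).comp R‖ + ‖((J' - K).comp J).comp R‖ := norm_add_le _ _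
      _ ≤ δ + (δ * (1 + δ)) * 1 := by
          refine add_le_add h1 ?_
          refine le_trans (opNorm_comp_le _ _) ?_
          exact mul_le_mul hD hR (norm_nonneg _) (by positivity)
      _ ≤ 3 * δ := by nlinarith
  · have heq : (1 - J.comp K).comp R'
        = (1 - J.comp J').comp R' + (J.comp (J' - K)).comp R' := by
      ext x; simp
    rw [heq]
    calc ‖(1 - J.comp J').comp R' + (J.comp (J' - K)).comp R'‖
        ≤ ‖(1 - J.comp J').comp R'‖ + ‖(J.comp (J' - K)).comp R'‖ := norm_add_le _ _
      _ ≤ δ + ((1 + δ) * δ) * 1 := by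
          refine add_le_add h2 ?_
          refine le_trans (opNorm_comp_le _ _) ?_
          exact mul_le_mul hD' hR' (norm_nonneg _) (by positivity)
      _ ≤ 3 * δ := by nlinarith
  · have heq : K.comp R' - R.comp K
        = (K - J').comp R' + (J'.comp R' - R.comp J') + R.comp (J' - K) := by
      ext x; simp
    rw [heq]
    calc ‖(K - J').comp R' + (J'.comp R' - R.comp J') + R.comp (J' - K)‖
        ≤ ‖(K - J').comp R'‖ + ‖J'.comp R' - R.comp J'‖ + ‖R.comp (J' - K)‖ :=
          norm_add₃_le
      _ ≤ δ * 1 + δ + 1 * δ := by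
          refine add_le_add (add_le_add ?_ h4) ?_
          · refine le_trans (opNorm_comp_le _ _) ?_
            refine mul_le_mul ?_ hR' (norm_nonneg _) hδ0
            rwa [norm_sub_rev]
          · exact le_trans (opNorm_comp_le _ _)
              (mul_le_mul hR hadj (norm_nonneg _) zero_le_one)
      _ ≤ 3 * δ := by linarith
end

section
/- The Sobolev trace estimate on an interval: for every f ∈ H¹([0,ℓ]) (ℓ > 0), |f(0)|² ≤ coth(ℓ/2)(‖f‖²_{L²([0,ℓ])} + ‖f'‖²_{L²([0,ℓ])}). -/
open MeasureTheory in
/-- Fubini on the triangle `{0 ≤ t ≤ x ≤ ℓ}`. -/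
lemma triangle_swap_aux (ℓ : ℝ) (hℓ : 0 < ℓ) (ψ g : ℝ → ℝ) (hψ : Continuous ψ)
    (hg : IntegrableOn g (Set.Icc 0 ℓ)) :
    (∫ x in (0:ℝ)..ℓ, ψ x * ∫ t in (0:ℝ)..x, g t)
      = ∫ t in (0:ℝ)..ℓ, (∫ x in t..ℓ, ψ x) * g t := by
  set μ := volume.restrict (Set.Ioc (0:ℝ) ℓ) with hμ
  haveI : IsFiniteMeasure μ := by
    constructor
    rw [hμ, Measure.restrict_apply_univ]
    exact measure_Ioc_lt_top
  have hgIoc : Integrable g μ := hg.mono_set Set.Ioc_subset_Icc_self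
  set H : ℝ × ℝ → ℝ :=
    fun p => {p : ℝ × ℝ | p.2 ≤ p.1}.indicator (fun p => ψ p.1 * g p.2) p with hH
  have hSmeas : MeasurableSet {p : ℝ × ℝ | p.2 ≤ p.1} :=
    measurableSet_le measurable_snd measurable_fst
  have hHm : AEStronglyMeasurable H (μ.prod μ) :=
    (((hψ.comp continuous_fst).aestronglyMeasurable).mul hgIoc.1.comp_snd).indicator hSmeas
  obtain ⟨C, hC⟩ := isCompact_Icc.exists_bound_of_continuousOn hψ.continuousOn
  have hC0 : 0 ≤ C := le_trans (norm_nonneg (ψ 0)) (hC 0 ⟨le_refl 0, hℓ.le⟩)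
  have hslice : ∀ x : ℝ, (fun t => H (x, t)) = (Set.Iic x).indicator (fun t => ψ x * g t) := by
    intro x; funext t
    by_cases h : t ≤ x <;> simp [hH, Set.indicator, h]
  have hsliceInt : ∀ x : ℝ, Integrable (fun t => H (x, t)) μ := by
    intro x; rw [hslice x]
    exact (hgIoc.const_mul (ψ x)).indicator measurableSet_Iic
  have hHint : Integrable H (μ.prod μ) := by
    rw [integrable_prod_iff hHm]
    refine ⟨Filter.Eventually.of_forall hsliceInt, ?_⟩
    apply Integrable.mono' (integrable_const (C * ∫ t, ‖g t‖ ∂μ))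
      hHm.norm.integral_prod_right'
    filter_upwards [ae_restrict_mem measurableSet_Ioc] with x hx
    have hxI : x ∈ Set.Icc 0 ℓ := Set.Ioc_subset_Icc_self hx
    have hb : ∀ t, ‖H (x, t)‖ ≤ C * ‖g t‖ := by
      intro t
      rw [show H (x, t) = (Set.Iic x).indicator (fun t => ψ x * g t) t from
        congrFun (hslice x) t]
      by_cases h : t ≤ x
      · simp only [Set.indicator_of_mem (Set.mem_Iic.2 h)]
        rw [norm_mul]
        exact mul_le_mul_of_nonneg_right (hC x hxI) (norm_nonneg _)
      · simp only [Set.indicator_of_notMem (by simpa using h : t ∉ Set.Iic x)]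
        simpa using mul_nonneg hC0 (norm_nonneg (g t))
    have h1 : ∫ t, ‖H (x, t)‖ ∂μ ≤ ∫ t, C * ‖g t‖ ∂μ :=
      integral_mono_of_nonneg (Filter.Eventually.of_forall fun t => norm_nonneg _)
        (hgIoc.norm.const_mul C) (Filter.Eventually.of_forall hb)
    rw [Real.norm_of_nonneg (integral_nonneg fun t => norm_nonneg _)]
    calc ∫ t, ‖H (x, t)‖ ∂μ ≤ ∫ t, C * ‖g t‖ ∂μ := h1
      _ = C * ∫ t, ‖g t‖ ∂μ := integral_const_mul _ _
  have hswap : ∫ x, (∫ t, H (x, t) ∂μ) ∂μ = ∫ t, (∫ x, H (x, t) ∂μ) ∂μ :=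
    integral_integral_swap hHint
  have hL : ∫ x, (∫ t, H (x, t) ∂μ) ∂μ
      = ∫ x in (0:ℝ)..ℓ, ψ x * ∫ t in (0:ℝ)..x, g t := by
    rw [intervalIntegral.integral_of_le hℓ.le]
    apply integral_congr_ae
    filter_upwards [ae_restrict_mem measurableSet_Ioc] with x hx
    rw [hslice x, integral_indicator measurableSet_Iic, hμ,
      Measure.restrict_restrict measurableSet_Iic]
    have hset : Set.Iic x ∩ Set.Ioc 0 ℓ = Set.Ioc 0 x := by
      ext t
      simp only [Set.mem_inter_iff, Set.mem_Iic, Set.mem_Ioc]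
      constructor
      · rintro ⟨h1, h2, _⟩; exact ⟨h2, h1⟩
      · rintro ⟨h1, h2⟩; exact ⟨h2, h1, h2.trans hx.2⟩
    rw [hset, intervalIntegral.integral_of_le hx.1.le, integral_const_mul]
  have hR : ∫ t, (∫ x, H (x, t) ∂μ) ∂μ
      = ∫ t in (0:ℝ)..ℓ, (∫ x in t..ℓ, ψ x) * g t := by
    rw [intervalIntegral.integral_of_le hℓ.le]
    apply integral_congr_ae
    filter_upwards [ae_restrict_mem measurableSet_Ioc] with t ht
    have hslice2 : (fun x => H (x, t)) = (Set.Ici t).indicator (fun x => ψ x * g t) := by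
      funext x
      by_cases h : t ≤ x <;> simp [hH, Set.indicator, h]
    rw [hslice2, integral_indicator measurableSet_Ici, hμ,
      Measure.restrict_restrict measurableSet_Ici]
    have hset : Set.Ici t ∩ Set.Ioc 0 ℓ = Set.Icc t ℓ := by
      ext x
      simp only [Set.mem_inter_iff, Set.mem_Ici, Set.mem_Ioc, Set.mem_Icc]
      constructor
      · rintro ⟨h1, _, h3⟩; exact ⟨h1, h3⟩
      · rintro ⟨h1, h2⟩; exact ⟨h1, ht.1.trans_le h1, h2⟩
    rw [hset, integral_Icc_eq_integral_Ioc, ← intervalIntegral.integral_of_le ht.2,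
      intervalIntegral.integral_mul_const]
  rw [← hL, hswap, hR]

open MeasureTheory intervalIntegral in
/-- Sobolev trace estimate on `[0, ℓ]`: if `f ∈ H¹([0,ℓ])`, i.e. `f` is the
continuous representative with weak (L²-) derivative `g`, then
`|f 0|² ≤ coth(ℓ/2) (‖f‖²_{L²} + ‖f'‖²_{L²})`. -/
theorem sobolev_trace_interval
    (ℓ : ℝ) (hℓ : 0 < ℓ) (f g : ℝ → ℝ)
    (hg : IntegrableOn g (Set.Icc 0 ℓ))
    (hg2 : IntegrableOn (fun x => (g x) ^ 2) (Set.Icc 0 ℓ))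
    (hf2 : IntegrableOn (fun x => (f x) ^ 2) (Set.Icc 0 ℓ))
    (hfg : ∀ x ∈ Set.Icc 0 ℓ, f x = f 0 + ∫ t in (0:ℝ)..x, g t) :
    |f 0| ^ 2 ≤ (Real.cosh (ℓ / 2) / Real.sinh (ℓ / 2)) *
      ((∫ x in (0:ℝ)..ℓ, (f x) ^ 2) + ∫ x in (0:ℝ)..ℓ, (g x) ^ 2) := by
  have hspos : 0 < Real.sinh ℓ := Real.sinh_pos_iff.2 hℓ
  set s : ℝ := Real.sinh ℓ with hs_def
  set ψ : ℝ → ℝ := fun x => Real.cosh (ℓ - x) / s with hψ_def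
  set φ : ℝ → ℝ := fun x => Real.sinh (ℓ - x) / s with hφ_def
  have hψc : Continuous ψ :=
    (Real.continuous_cosh.comp (continuous_const.sub continuous_id)).div_const s
  have hφc : Continuous φ :=
    (Real.continuous_sinh.comp (continuous_const.sub continuous_id)).div_const s
  have huIcc : Set.uIcc (0:ℝ) ℓ = Set.Icc 0 ℓ := Set.uIcc_of_le hℓ.le
  -- derivative helpers
  have hderiv : ∀ x : ℝ, HasDerivAt (fun y => -Real.sinh (ℓ - y)) (Real.cosh (ℓ - x)) x := by
    intro x
    have hu : HasDerivAt (fun y : ℝ => ℓ - y) (-1) x := (hasDerivAt_id x).const_sub ℓ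
    have := ((Real.hasDerivAt_sinh (ℓ - x)).comp x hu).neg
    refine this.congr_deriv ?_
    ring
  -- (B) : ∫ x in t..ℓ, ψ x = φ t
  have hB : ∀ t : ℝ, (∫ x in t..ℓ, ψ x) = φ t := by
    intro t
    have h1 : (∫ x in t..ℓ, Real.cosh (ℓ - x)) = Real.sinh (ℓ - t) := by
      rw [integral_eq_sub_of_hasDerivAt (fun x _ => hderiv x)
        ((Real.continuous_cosh.comp (continuous_const.sub continuous_id)).intervalIntegrable t ℓ)]
      simp
    calc (∫ x in t..ℓ, ψ x) = (∫ x in t..ℓ, Real.cosh (ℓ - x)) / s := by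
          rw [hψ_def]; exact integral_div _ _
      _ = Real.sinh (ℓ - t) / s := by rw [h1]
      _ = φ t := rfl
  have hA : (∫ x in (0:ℝ)..ℓ, ψ x) = 1 := by
    rw [hB 0]
    simp only [hφ_def, sub_zero]
    exact div_self hspos.ne'
  -- F : primitive of g
  set F : ℝ → ℝ := fun x => ∫ t in (0:ℝ)..x, g t with hF_def
  have hFcont : ContinuousOn F (Set.Icc 0 ℓ) := by
    have := intervalIntegral.continuousOn_primitive_interval (a := (0:ℝ)) (b := ℓ)
      (μ := volume) (f := g) (by rwa [huIcc])
    rwa [huIcc] at this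
  -- triangle swap
  have htr : (∫ x in (0:ℝ)..ℓ, ψ x * F x) = ∫ t in (0:ℝ)..ℓ, φ t * g t := by
    have := triangle_swap_aux ℓ hℓ ψ g hψc hg
    simp only [hB] at this
    exact this
  -- integrability
  have hgI : IntervalIntegrable g volume 0 ℓ :=
    IntegrableOn.intervalIntegrable (by rwa [huIcc])
  have hf2I : IntervalIntegrable (fun x => (f x) ^ 2) volume 0 ℓ :=
    IntegrableOn.intervalIntegrable (by rwa [huIcc])
  have hg2I : IntervalIntegrable (fun x => (g x) ^ 2) volume 0 ℓ :=
    IntegrableOn.intervalIntegrable (by rwa [huIcc])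
  have hfI : IntervalIntegrable f volume 0 ℓ := by
    apply IntegrableOn.intervalIntegrable
    rw [huIcc]
    have h1 : IntegrableOn (fun x => f 0 + F x) (Set.Icc 0 ℓ) volume :=
      (continuousOn_const.add hFcont).integrableOn_compact isCompact_Icc
    exact h1.congr_fun (fun x hx => (hfg x hx).symm) measurableSet_Icc
  have hψf : IntervalIntegrable (fun x => ψ x * f x) volume 0 ℓ :=
    hfI.continuousOn_mul hψc.continuousOn
  have hφg : IntervalIntegrable (fun x => φ x * g x) volume 0 ℓ :=
    hgI.continuousOn_mul hφc.continuousOn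
  have hψF : IntervalIntegrable (fun x => ψ x * F x) volume 0 ℓ := by
    apply ContinuousOn.intervalIntegrable
    rw [huIcc]
    exact hψc.continuousOn.mul hFcont
  -- key identity
  have hI : (∫ x in (0:ℝ)..ℓ, (ψ x * f x - φ x * g x)) = f 0 := by
    have h1 : (∫ x in (0:ℝ)..ℓ, ψ x * f x)
        = f 0 + ∫ x in (0:ℝ)..ℓ, φ x * g x := by
      have hcongr : (∫ x in (0:ℝ)..ℓ, ψ x * f x)
          = ∫ x in (0:ℝ)..ℓ, (f 0 * ψ x + ψ x * F x) := by
        apply intervalIntegral.integral_congr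
        intro x hx
        rw [huIcc] at hx
        dsimp only
        rw [hfg x hx]
        rw [hF_def]
        ring
      rw [hcongr, intervalIntegral.integral_add
        ((intervalIntegrable_const (c := f 0)).mul_continuousOn hψc.continuousOn) hψF]
      have : (∫ x in (0:ℝ)..ℓ, f 0 * ψ x) = f 0 := by
        rw [intervalIntegral.integral_const_mul, hA, mul_one]
      rw [this, htr]
    rw [intervalIntegral.integral_sub hψf hφg, h1]
    ring
  -- K
  set K : ℝ := ∫ x in (0:ℝ)..ℓ, (ψ x ^ 2 + φ x ^ 2) with hK_def
  have hKval : K = Real.cosh ℓ / s := by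
    have hP : ∀ x : ℝ, HasDerivAt (fun y => -(Real.sinh (ℓ - y) * Real.cosh (ℓ - y)))
        (Real.cosh (ℓ - x) ^ 2 + Real.sinh (ℓ - x) ^ 2) x := by
      intro x
      have hu : HasDerivAt (fun y : ℝ => ℓ - y) (-1) x := (hasDerivAt_id x).const_sub ℓ
      have hsinh := (Real.hasDerivAt_sinh (ℓ - x)).comp x hu
      have hcosh := (Real.hasDerivAt_cosh (ℓ - x)).comp x hu
      have := (hsinh.mul hcosh).neg
      refine this.congr_deriv ?_
      simp only [Function.comp_apply]
      ring
    have h2 : (∫ x in (0:ℝ)..ℓ, (Real.cosh (ℓ - x) ^ 2 + Real.sinh (ℓ - x) ^ 2))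
        = Real.sinh ℓ * Real.cosh ℓ := by
      rw [integral_eq_sub_of_hasDerivAt (fun x _ => hP x)
        (((Real.continuous_cosh.comp (continuous_const.sub continuous_id)).pow 2).add
          ((Real.continuous_sinh.comp (continuous_const.sub continuous_id)).pow 2)
          |>.intervalIntegrable 0 ℓ)]
      simp
    have hcongr : K = (∫ x in (0:ℝ)..ℓ,
        (Real.cosh (ℓ - x) ^ 2 + Real.sinh (ℓ - x) ^ 2)) / s ^ 2 := by
      rw [hK_def, ← intervalIntegral.integral_div]
      apply intervalIntegral.integral_congr
      intro x _
      simp only [hψ_def, hφ_def]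
      field_simp
    rw [hcongr, h2]
    rw [hs_def]
    field_simp
  -- nonnegativity of the L² masses
  set S1 : ℝ := ∫ x in (0:ℝ)..ℓ, (f x) ^ 2 with hS1_def
  set S2 : ℝ := ∫ x in (0:ℝ)..ℓ, (g x) ^ 2 with hS2_def
  have hS1nn : 0 ≤ S1 := intervalIntegral.integral_nonneg hℓ.le (fun x _ => sq_nonneg _)
  have hS2nn : 0 ≤ S2 := intervalIntegral.integral_nonneg hℓ.le (fun x _ => sq_nonneg _)
  -- quadratic nonnegativity
  have hquad : ∀ c : ℝ, 0 ≤ K * (c * c) + (-2 * f 0) * c + (S1 + S2) := by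
    intro c
    have hψφsqI : IntervalIntegrable (fun x => ψ x ^ 2 + φ x ^ 2) volume 0 ℓ :=
      ((hψc.pow 2).add (hφc.pow 2)).intervalIntegrable 0 ℓ
    have hexp : (∫ x in (0:ℝ)..ℓ, ((c * ψ x - f x) ^ 2 + (c * φ x + g x) ^ 2))
        = K * (c * c) + (-2 * f 0) * c + (S1 + S2) := by
      have heq : (fun x => (c * ψ x - f x) ^ 2 + (c * φ x + g x) ^ 2)
          = fun x => (c * c) * (ψ x ^ 2 + φ x ^ 2)
            - (2 * c) * (ψ x * f x - φ x * g x) + ((f x) ^ 2 + (g x) ^ 2) := by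
        funext x; ring
      rw [heq]
      rw [intervalIntegral.integral_add
        ((hψφsqI.const_mul (c * c)).sub ((hψf.sub hφg).const_mul (2 * c)))
        (hf2I.add hg2I)]
      rw [intervalIntegral.integral_sub (hψφsqI.const_mul (c * c))
        ((hψf.sub hφg).const_mul (2 * c))]
      rw [intervalIntegral.integral_const_mul, intervalIntegral.integral_const_mul,
        hI, intervalIntegral.integral_add hf2I hg2I]
      rw [← hK_def, ← hS1_def, ← hS2_def]
      ring
    rw [← hexp]
    exact intervalIntegral.integral_nonneg hℓ.le
      (fun x _ => add_nonneg (sq_nonneg _) (sq_nonneg _))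
  have hdisc := discrim_le_zero hquad
  rw [discrim] at hdisc
  have hKS : (f 0) ^ 2 ≤ K * (S1 + S2) := by nlinarith [hdisc]
  -- monotonicity of coth
  have hs2pos : 0 < Real.sinh (ℓ / 2) := Real.sinh_pos_iff.2 (half_pos hℓ)
  have hmono : Real.cosh ℓ / s ≤ Real.cosh (ℓ / 2) / Real.sinh (ℓ / 2) := by
    rw [hs_def, div_le_div_iff₀ hspos hs2pos]
    have h1 := Real.sinh_sub ℓ (ℓ / 2)
    have h2 : ℓ - ℓ / 2 = ℓ / 2 := by ring
    rw [h2] at h1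
    nlinarith [hs2pos]
  calc |f 0| ^ 2 = (f 0) ^ 2 := sq_abs _
    _ ≤ K * (S1 + S2) := hKS
    _ ≤ (Real.cosh (ℓ / 2) / Real.sinh (ℓ / 2)) * (S1 + S2) := by
        apply mul_le_mul_of_nonneg_right _ (add_nonneg hS1nn hS2nn)
        rw [hKval]; exact hmono
end
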